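/- arXiv:math/0506576 — 2 statements merged into one kernel-verified Lean document; each statement's English description precedes it below -/
import Mathlib

section
/- Let γ = [[a,b],[c,d]] ∈ SL₂(ℝ) act on ℍ by γτ = (aτ+b)/(cτ+d). Let F, x : ℍ×ℍ → ℂ be holomorphic and nonvanishing, with x(γτ₁, τ₂) = x(τ₁, τ₂) and F(γτ₁, τ₂) = χ·(cτ₁+d)·F(τ₁,τ₂) for all (τ₁,τ₂) ∈ ℍ×ℍ, where χ ∈ ℂ∖{0} is a constant. Set G_{F,1} = (1/(2πi))·(∂F/∂τ₁)/F and G_{x,1} = (1/(2πi))·(∂x/∂τ₁)/x, and H = D_{q₁}G_{x,1} − 2·G_{F,1}·G_{x,1} where D_{q₁} = (1/(2πi))·∂/∂τ₁. Then H(γτ₁, τ₂) = (cτ₁+d)⁴·H(τ₁,τ₂) for all (τ₁,τ₂) ∈ ℍ×ℍ; that is, H transforms like a modular form of weight (4,0) with trivial character. -/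
/- STATEMENT 3: if `x` is invariant and `F` transforms with weight `(1,0)` and
character value `χ` in the first variable, then
`H = D_{q₁}G_{x,1} − 2 G_{F,1} G_{x,1}` transforms with weight `(4,0)`. -/

open Complex

/-- `D_{q₁}t = (1/(2πi)) ∂t/∂τ₁`. -/
noncomputable def Dq1 (f : ℂ × ℂ → ℂ) : ℂ × ℂ → ℂ :=
  fun p => 1 / (2 * (Real.pi : ℂ) * Complex.I) * deriv (fun z => f (z, p.2)) p.1

/-- `G_{t,1} = (1/(2πi)) (∂t/∂τ₁)/t`. -/
noncomputable def Gq1 (x : ℂ × ℂ → ℂ) : ℂ × ℂ → ℂ :=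
  fun p => 1 / (2 * (Real.pi : ℂ) * Complex.I) * deriv (fun z => x (z, p.2)) p.1 / x p


noncomputable def G1 (u : ℂ → ℂ) : ℂ → ℂ :=
  fun z => 1 / (2 * (Real.pi : ℂ) * Complex.I) * deriv u z / u z

lemma jne (a b c d : ℝ) (hdet : a * d - b * c = 1) (z : ℂ) (hz : 0 < z.im) :
    (c : ℂ) * z + d ≠ 0 := by
  intro h
  have him : c * z.im = 0 := by
    have := congrArg Complex.im h
    simpa using this
  have hc : c = 0 := by
    rcases mul_eq_zero.1 him with h' | h'
    · exact h'
    · exact absurd h' (ne_of_gt hz)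
  have hre : c * z.re + d = 0 := by
    have := congrArg Complex.re h
    simpa using this
  rw [hc] at hre hdet
  simp at hre
  rw [hre] at hdet
  simp at hdet

lemma mim (a b c d : ℝ) (hdet : a * d - b * c = 1) (z : ℂ) (hz : 0 < z.im) :
    0 < ((((a : ℂ) * z + b) / ((c : ℂ) * z + d)).im) := by
  have hne := jne a b c d hdet z hz
  have h1 : (((a : ℂ) * z + b) / ((c : ℂ) * z + d)).im
      = z.im / Complex.normSq ((c : ℂ) * z + d) := by
    rw [Complex.div_im, div_sub_div_same]
    congr 1
    simp [Complex.add_im, Complex.add_re, Complex.mul_im, Complex.mul_re]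
    linear_combination z.im * hdet
  rw [h1]
  exact div_pos hz (Complex.normSq_pos.2 hne)

lemma mderiv (a b c d : ℝ) (hdet : a * d - b * c = 1) (z : ℂ) (hne : (c : ℂ) * z + d ≠ 0) :
    HasDerivAt (fun w : ℂ => ((a : ℂ) * w + b) / ((c : ℂ) * w + d))
      (1 / ((c : ℂ) * z + d) ^ 2) z := by
  have hdetC : (a : ℂ) * d - (b : ℂ) * c = 1 := by exact_mod_cast hdet
  have h1 : HasDerivAt (fun w : ℂ => (a : ℂ) * w + b) (a : ℂ) z := by
    simpa using ((hasDerivAt_id z).const_mul (a : ℂ)).add_const (b : ℂ)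
  have h2 : HasDerivAt (fun w : ℂ => (c : ℂ) * w + d) (c : ℂ) z := by
    simpa using ((hasDerivAt_id z).const_mul (c : ℂ)).add_const (d : ℂ)
  have h3 := h1.div h2 hne
  have h4 : (a : ℂ) * ((c : ℂ) * z + d) - ((a : ℂ) * z + b) * c = 1 := by
    linear_combination hdetC
  rw [h4] at h3
  exact h3

lemma key (a b c d : ℝ) (hdet : a * d - b * c = 1) (χ : ℂ) (hχ : χ ≠ 0) (u f : ℂ → ℂ)
    (hu : ∀ z : ℂ, 0 < z.im → AnalyticAt ℂ u z)
    (hf : ∀ z : ℂ, 0 < z.im → AnalyticAt ℂ f z)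
    (hune : ∀ z : ℂ, 0 < z.im → u z ≠ 0)
    (hfne : ∀ z : ℂ, 0 < z.im → f z ≠ 0)
    (huinv : ∀ z : ℂ, 0 < z.im → u (((a:ℂ)*z+b)/((c:ℂ)*z+d)) = u z)
    (hfmod : ∀ z : ℂ, 0 < z.im → f (((a:ℂ)*z+b)/((c:ℂ)*z+d)) = χ * ((c:ℂ)*z+d) * f z)
    (τ : ℂ) (hτ : 0 < τ.im) :
    1 / (2 * (Real.pi : ℂ) * Complex.I) * deriv (G1 u) (((a:ℂ)*τ+b)/((c:ℂ)*τ+d))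
      - 2 * G1 f (((a:ℂ)*τ+b)/((c:ℂ)*τ+d)) * G1 u (((a:ℂ)*τ+b)/((c:ℂ)*τ+d))
    = ((c:ℂ)*τ+d)^4 *
      (1 / (2 * (Real.pi : ℂ) * Complex.I) * deriv (G1 u) τ - 2 * G1 f τ * G1 u τ) := by
  have hπ : 2 * (Real.pi : ℂ) * Complex.I ≠ 0 := by
    simp [Real.pi_ne_zero, Complex.I_ne_zero]
  have hjne : ∀ z : ℂ, 0 < z.im → (c:ℂ)*z+d ≠ 0 := fun z hz => jne a b c d hdet z hz
  have hmim : ∀ z : ℂ, 0 < z.im → 0 < ((((a:ℂ)*z+b)/((c:ℂ)*z+d)).im) :=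
    fun z hz => mim a b c d hdet z hz
  have hmd : ∀ z : ℂ, 0 < z.im →
      HasDerivAt (fun w : ℂ => ((a:ℂ)*w+b)/((c:ℂ)*w+d)) (1/((c:ℂ)*z+d)^2) z :=
    fun z hz => mderiv a b c d hdet z (hjne z hz)
  have hUo : IsOpen {z : ℂ | 0 < z.im} := isOpen_lt continuous_const Complex.continuous_im
  -- Step A
  have hderu : ∀ z : ℂ, 0 < z.im →
      deriv u (((a:ℂ)*z+b)/((c:ℂ)*z+d)) = ((c:ℂ)*z+d)^2 * deriv u z := by
    intro z hz
    have hcomp : HasDerivAt (fun w : ℂ => u (((a:ℂ)*w+b)/((c:ℂ)*w+d)))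
        (deriv u (((a:ℂ)*z+b)/((c:ℂ)*z+d)) * (1/((c:ℂ)*z+d)^2)) z :=
      ((hu _ (hmim z hz)).differentiableAt.hasDerivAt).comp z (hmd z hz)
    have heq : (fun w : ℂ => u (((a:ℂ)*w+b)/((c:ℂ)*w+d))) =ᶠ[nhds z] u :=
      Filter.eventually_of_mem (hUo.mem_nhds hz) (fun w hw => huinv w hw)
    have h5 : deriv u (((a:ℂ)*z+b)/((c:ℂ)*z+d)) * (1/((c:ℂ)*z+d)^2) = deriv u z := by
      rw [← hcomp.deriv]; exact heq.deriv_eq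
    rw [mul_one_div, div_eq_iff (pow_ne_zero 2 (hjne z hz))] at h5
    linear_combination h5
  -- Step B
  have hderf : ∀ z : ℂ, 0 < z.im →
      deriv f (((a:ℂ)*z+b)/((c:ℂ)*z+d))
        = ((c:ℂ)*z+d)^2 * (χ * c * f z + χ * ((c:ℂ)*z+d) * deriv f z) := by
    intro z hz
    have hcomp : HasDerivAt (fun w : ℂ => f (((a:ℂ)*w+b)/((c:ℂ)*w+d)))
        (deriv f (((a:ℂ)*z+b)/((c:ℂ)*z+d)) * (1/((c:ℂ)*z+d)^2)) z :=
      ((hf _ (hmim z hz)).differentiableAt.hasDerivAt).comp z (hmd z hz)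
    have hJ : HasDerivAt (fun w : ℂ => χ * ((c:ℂ)*w+d)) (χ * c) z := by
      simpa using (((hasDerivAt_id z).const_mul (c : ℂ)).add_const (d : ℂ)).const_mul χ
    have hR : HasDerivAt (fun w : ℂ => χ * ((c:ℂ)*w+d) * f w)
        (χ * c * f z + χ * ((c:ℂ)*z+d) * deriv f z) z :=
      hJ.mul (hf z hz).differentiableAt.hasDerivAt
    have heq : (fun w : ℂ => f (((a:ℂ)*w+b)/((c:ℂ)*w+d)))
        =ᶠ[nhds z] (fun w : ℂ => χ * ((c:ℂ)*w+d) * f w) :=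
      Filter.eventually_of_mem (hUo.mem_nhds hz) (fun w hw => hfmod w hw)
    have h5 : deriv f (((a:ℂ)*z+b)/((c:ℂ)*z+d)) * (1/((c:ℂ)*z+d)^2)
        = χ * c * f z + χ * ((c:ℂ)*z+d) * deriv f z := by
      rw [← hcomp.deriv, ← hR.deriv]; exact heq.deriv_eq
    rw [mul_one_div, div_eq_iff (pow_ne_zero 2 (hjne z hz))] at h5
    linear_combination h5
  -- Step C
  have hGumod : ∀ z : ℂ, 0 < z.im →
      G1 u (((a:ℂ)*z+b)/((c:ℂ)*z+d)) = ((c:ℂ)*z+d)^2 * G1 u z := by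
    intro z hz
    simp only [G1]
    rw [hderu z hz, huinv z hz]
    ring
  have hGfmod : ∀ z : ℂ, 0 < z.im →
      G1 f (((a:ℂ)*z+b)/((c:ℂ)*z+d))
        = ((c:ℂ)*z+d)^2 * G1 f z + (c:ℂ) * ((c:ℂ)*z+d) / (2 * (Real.pi:ℂ) * Complex.I) := by
    intro z hz
    simp only [G1]
    rw [hderf z hz, hfmod z hz]
    field_simp [hfne z hz, hχ, hjne z hz, hπ]
    ring
  -- Step D
  have hGud : ∀ z : ℂ, 0 < z.im → DifferentiableAt ℂ (G1 u) z := by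
    intro z hz
    have h1 : AnalyticAt ℂ (deriv u) z := by
      have hA : AnalyticOnNhd ℂ u {w : ℂ | 0 < w.im} := fun w hw => hu w hw
      exact hA.deriv z hz
    exact ((differentiableAt_const _).mul h1.differentiableAt).div
      (hu z hz).differentiableAt (hune z hz)
  -- Step E
  have hcomp : HasDerivAt (fun w : ℂ => G1 u (((a:ℂ)*w+b)/((c:ℂ)*w+d)))
      (deriv (G1 u) (((a:ℂ)*τ+b)/((c:ℂ)*τ+d)) * (1/((c:ℂ)*τ+d)^2)) τ :=
    by have := ((hGud _ (hmim τ hτ)).hasDerivAt).comp τ (hmd τ hτ); exact this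
  have hJ2 : HasDerivAt (fun w : ℂ => ((c:ℂ)*w+d)^2) (2 * ((c:ℂ)*τ+d) * c) τ := by
    have hJ : HasDerivAt (fun w : ℂ => (c:ℂ)*w+d) (c : ℂ) τ := by
      simpa using ((hasDerivAt_id τ).const_mul (c : ℂ)).add_const (d : ℂ)
    have := hJ.fun_pow 2
    simpa [mul_comm, mul_assoc, mul_left_comm] using this
  have hR : HasDerivAt (fun w : ℂ => ((c:ℂ)*w+d)^2 * G1 u w)
      (2 * ((c:ℂ)*τ+d) * c * G1 u τ + ((c:ℂ)*τ+d)^2 * deriv (G1 u) τ) τ :=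
    hJ2.mul (hGud τ hτ).hasDerivAt
  have heq : (fun w : ℂ => G1 u (((a:ℂ)*w+b)/((c:ℂ)*w+d)))
      =ᶠ[nhds τ] (fun w : ℂ => ((c:ℂ)*w+d)^2 * G1 u w) :=
    Filter.eventually_of_mem (hUo.mem_nhds hτ) (fun w hw => hGumod w hw)
  have hE : deriv (G1 u) (((a:ℂ)*τ+b)/((c:ℂ)*τ+d)) * (1/((c:ℂ)*τ+d)^2)
      = 2 * ((c:ℂ)*τ+d) * c * G1 u τ + ((c:ℂ)*τ+d)^2 * deriv (G1 u) τ := by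
    rw [← hcomp.deriv, ← hR.deriv]; exact heq.deriv_eq
  have hE' : deriv (G1 u) (((a:ℂ)*τ+b)/((c:ℂ)*τ+d))
      = ((c:ℂ)*τ+d)^2 * (2 * ((c:ℂ)*τ+d) * c * G1 u τ + ((c:ℂ)*τ+d)^2 * deriv (G1 u) τ) := by
    rw [mul_one_div, div_eq_iff (pow_ne_zero 2 (hjne τ hτ))] at hE
    linear_combination hE
  -- Final assembly
  rw [hE', hGumod τ hτ, hGfmod τ hτ]
  field_simp [hπ]
  ring

theorem stmt3 (a b c d : ℝ) (hdet : a * d - b * c = 1)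
    (F x : ℂ × ℂ → ℂ) (χ : ℂ) (hχ : χ ≠ 0)
    (hF : ∀ p : ℂ × ℂ, 0 < p.1.im → 0 < p.2.im → AnalyticAt ℂ F p)
    (hx : ∀ p : ℂ × ℂ, 0 < p.1.im → 0 < p.2.im → AnalyticAt ℂ x p)
    (hFne : ∀ p : ℂ × ℂ, 0 < p.1.im → 0 < p.2.im → F p ≠ 0)
    (hxne : ∀ p : ℂ × ℂ, 0 < p.1.im → 0 < p.2.im → x p ≠ 0)
    (hxinv : ∀ τ₁ τ₂ : ℂ, 0 < τ₁.im → 0 < τ₂.im →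
      x (((a : ℂ) * τ₁ + (b : ℂ)) / ((c : ℂ) * τ₁ + (d : ℂ)), τ₂) = x (τ₁, τ₂))
    (hFmod : ∀ τ₁ τ₂ : ℂ, 0 < τ₁.im → 0 < τ₂.im →
      F (((a : ℂ) * τ₁ + (b : ℂ)) / ((c : ℂ) * τ₁ + (d : ℂ)), τ₂)
        = χ * ((c : ℂ) * τ₁ + (d : ℂ)) * F (τ₁, τ₂)) :
    ∀ τ₁ τ₂ : ℂ, 0 < τ₁.im → 0 < τ₂.im →
      (Dq1 (Gq1 x) (((a : ℂ) * τ₁ + (b : ℂ)) / ((c : ℂ) * τ₁ + (d : ℂ)), τ₂)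
        - 2 * Gq1 F (((a : ℂ) * τ₁ + (b : ℂ)) / ((c : ℂ) * τ₁ + (d : ℂ)), τ₂)
            * Gq1 x (((a : ℂ) * τ₁ + (b : ℂ)) / ((c : ℂ) * τ₁ + (d : ℂ)), τ₂))
      = ((c : ℂ) * τ₁ + (d : ℂ)) ^ 4 *
        (Dq1 (Gq1 x) (τ₁, τ₂) - 2 * Gq1 F (τ₁, τ₂) * Gq1 x (τ₁, τ₂)) := by
  intro τ₁ τ₂ h1 h2
  exact key a b c d hdet χ hχ (fun z => x (z, τ₂)) (fun z => F (z, τ₂))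
    (fun z hz => (hx (z, τ₂) hz h2).curry_left)
    (fun z hz => (hF (z, τ₂) hz h2).curry_left)
    (fun z hz => hxne (z, τ₂) hz h2)
    (fun z hz => hFne (z, τ₂) hz h2)
    (fun z hz => hxinv z τ₂ hz h2)
    (fun z hz => hFmod z τ₂ hz h2)
    τ₁ h1
end

section
/- Let γ = [[a,b],[c,d]] ∈ SL₂(ℝ) act on ℍ by γτ = (aτ+b)/(cτ+d). Let F : ℍ×ℍ → ℂ be holomorphic and nonvanishing with F(γτ₁, τ₂) = χ·(cτ₁+d)·F(τ₁,τ₂) for all (τ₁,τ₂) ∈ ℍ×ℍ, where χ ∈ ℂ∖{0} is a constant. Set G_{F,1} = (1/(2πi))·(∂F/∂τ₁)/F and H = D_{q₁}G_{F,1} − G_{F,1}², where D_{q₁} = (1/(2πi))·∂/∂τ₁. Then H(γτ₁, τ₂) = (cτ₁+d)⁴·H(τ₁,τ₂) for all (τ₁,τ₂) ∈ ℍ×ℍ; that is, H transforms like a modular form of weight (4,0) with trivial character. -/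
/- STATEMENT 4: if `F` transforms with weight `(1,0)` and character value `χ`
in the first variable, then `H = D_{q₁}G_{F,1} − G_{F,1}²` transforms with
weight `(4,0)` and trivial character. -/

open Complex

private lemma analyticAt_deriv {f : ℂ → ℂ} {x : ℂ} (h : AnalyticAt ℂ f x) :
    AnalyticAt ℂ (deriv f) x :=
  ((ContinuousLinearMap.apply ℂ ℂ (1:ℂ)).analyticAt _).comp h.fderiv

theorem stmt4 (a b c d : ℝ) (hdet : a * d - b * c = 1)
    (F : ℂ × ℂ → ℂ) (χ : ℂ) (hχ : χ ≠ 0)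
    (hF : ∀ p : ℂ × ℂ, 0 < p.1.im → 0 < p.2.im → AnalyticAt ℂ F p)
    (hFne : ∀ p : ℂ × ℂ, 0 < p.1.im → 0 < p.2.im → F p ≠ 0)
    (hFmod : ∀ τ₁ τ₂ : ℂ, 0 < τ₁.im → 0 < τ₂.im →
      F (((a : ℂ) * τ₁ + (b : ℂ)) / ((c : ℂ) * τ₁ + (d : ℂ)), τ₂)
        = χ * ((c : ℂ) * τ₁ + (d : ℂ)) * F (τ₁, τ₂)) :
    ∀ τ₁ τ₂ : ℂ, 0 < τ₁.im → 0 < τ₂.im →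
      (Dq1 (Gq1 F) (((a : ℂ) * τ₁ + (b : ℂ)) / ((c : ℂ) * τ₁ + (d : ℂ)), τ₂)
        - (Gq1 F (((a : ℂ) * τ₁ + (b : ℂ)) / ((c : ℂ) * τ₁ + (d : ℂ)), τ₂)) ^ 2)
      = ((c : ℂ) * τ₁ + (d : ℂ)) ^ 4 *
        (Dq1 (Gq1 F) (τ₁, τ₂) - (Gq1 F (τ₁, τ₂)) ^ 2) := by
  intro τ₁ τ₂ h₁ h₂
  have hdetC : (a : ℂ) * d - b * c = 1 := by exact_mod_cast hdet
  set K : ℂ := 1 / (2 * (Real.pi : ℂ) * Complex.I) with hK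
  -- nonvanishing of j
  have hj : ∀ z : ℂ, 0 < z.im → (c : ℂ) * z + d ≠ 0 := by
    intro z hz h0
    have him0 : c * z.im = 0 := by
      have := congrArg Complex.im h0
      simpa using this
    have hc : c = 0 := by
      rcases mul_eq_zero.mp him0 with h | h
      · exact h
      · exact absurd h (ne_of_gt hz)
    have hre0 : c * z.re + d = 0 := by
      have := congrArg Complex.re h0
      simpa using this
    rw [hc] at hre0
    simp at hre0
    rw [hc, hre0] at hdet
    norm_num at hdet
  -- positivity of the imaginary part of γ z
  have him : ∀ z : ℂ, 0 < z.im →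
      0 < ((((a : ℂ) * z + b) / ((c : ℂ) * z + d)).im) := by
    intro z hz
    have hv := hj z hz
    have hnsq : 0 < Complex.normSq ((c : ℂ) * z + d) := Complex.normSq_pos.mpr hv
    have key : (((a : ℂ) * z + b) / ((c : ℂ) * z + d)).im
        = z.im / Complex.normSq ((c : ℂ) * z + d) := by
      rw [Complex.div_im, div_sub_div_same]
      have hnum : ((a : ℂ) * z + b).im * ((c : ℂ) * z + d).re
          - ((a : ℂ) * z + b).re * ((c : ℂ) * z + d).im = z.im := by
        simp only [Complex.add_im, Complex.add_re, Complex.mul_im, Complex.mul_re,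
          Complex.ofReal_re, Complex.ofReal_im]
        linear_combination z.im * hdet
      rw [hnum]
    rw [key]
    positivity
  set f : ℂ → ℂ := fun z => F (z, τ₂) with hfdef
  have hfa : ∀ z : ℂ, 0 < z.im → AnalyticAt ℂ f z := by
    intro z hz
    have hpair : AnalyticAt ℂ (fun z : ℂ => (z, τ₂)) z := analyticAt_id.prod analyticAt_const
    exact (hF (z, τ₂) hz h₂).comp (f := fun z => (z, τ₂)) hpair
  have hfne : ∀ z : ℂ, 0 < z.im → f z ≠ 0 := fun z hz => hFne (z, τ₂) hz h₂
  set g : ℂ → ℂ := fun z => K * deriv f z / f z with hgdef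
  have hga : ∀ z : ℂ, 0 < z.im → AnalyticAt ℂ g z := by
    intro z hz
    exact (analyticAt_const.mul (analyticAt_deriv (hfa z hz))).div (hfa z hz) (hfne z hz)
  have hU : IsOpen {z : ℂ | 0 < z.im} := isOpen_lt continuous_const Complex.continuous_im
  -- derivative of the Möbius map
  have hγd : ∀ z : ℂ, 0 < z.im →
      HasDerivAt (fun w : ℂ => ((a : ℂ) * w + b) / ((c : ℂ) * w + d))
        (1 / ((c : ℂ) * z + d) ^ 2) z := by
    intro z hz
    have h1 : HasDerivAt (fun w : ℂ => (a : ℂ) * w + b) a z := by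
      simpa using ((hasDerivAt_id z).const_mul (a : ℂ)).add_const (b : ℂ)
    have h2 : HasDerivAt (fun w : ℂ => (c : ℂ) * w + d) c z := by
      simpa using ((hasDerivAt_id z).const_mul (c : ℂ)).add_const (d : ℂ)
    have h3 := h1.fun_div h2 (hj z hz)
    refine h3.congr_deriv ?_
    rw [div_left_inj' (pow_ne_zero 2 (hj z hz))]
    linear_combination hdetC
  -- step 1 : transformation of deriv f
  have key1 : ∀ z : ℂ, 0 < z.im →
      deriv f (((a : ℂ) * z + b) / ((c : ℂ) * z + d)) * (1 / ((c : ℂ) * z + d) ^ 2)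
        = χ * c * f z + χ * ((c : ℂ) * z + d) * deriv f z := by
    intro z hz
    have hγz := him z hz
    have hdf : HasDerivAt f (deriv f (((a : ℂ) * z + b) / ((c : ℂ) * z + d)))
        (((a : ℂ) * z + b) / ((c : ℂ) * z + d)) :=
      ((hfa _ hγz).differentiableAt).hasDerivAt
    have hdfz : HasDerivAt f (deriv f z) z := ((hfa z hz).differentiableAt).hasDerivAt
    have hcomp : HasDerivAt (fun w : ℂ => f (((a : ℂ) * w + b) / ((c : ℂ) * w + d)))
        (deriv f (((a : ℂ) * z + b) / ((c : ℂ) * z + d)) * (1 / ((c : ℂ) * z + d) ^ 2)) z :=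
      by have := hdf.comp z (hγd z hz); exact this
    have hlin : HasDerivAt (fun w : ℂ => χ * ((c : ℂ) * w + d)) (χ * c) z := by
      simpa using (((hasDerivAt_id z).const_mul (c : ℂ)).add_const (d : ℂ)).const_mul χ
    have hrhs : HasDerivAt (fun w : ℂ => χ * ((c : ℂ) * w + d) * f w)
        (χ * c * f z + χ * ((c : ℂ) * z + d) * deriv f z) z := by
      have := hlin.fun_mul hdfz
      convert this using 1 <;> ring
    have heq : (fun w : ℂ => f (((a : ℂ) * w + b) / ((c : ℂ) * w + d)))
        =ᶠ[nhds z] (fun w : ℂ => χ * ((c : ℂ) * w + d) * f w) := by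
      filter_upwards [hU.mem_nhds hz] with w hw
      exact hFmod w τ₂ hw h₂
    exact (hcomp.congr_of_eventuallyEq heq.symm).unique hrhs
  -- step 2 : transformation of g
  have hgmod : ∀ z : ℂ, 0 < z.im →
      g (((a : ℂ) * z + b) / ((c : ℂ) * z + d))
        = c * ((c : ℂ) * z + d) * K + ((c : ℂ) * z + d) ^ 2 * g z := by
    intro z hz
    have hγz := him z hz
    have hjz := hj z hz
    have hfz := hfne z hz
    have hk1 := key1 z hz
    have hfγ : f (((a : ℂ) * z + b) / ((c : ℂ) * z + d)) = χ * ((c : ℂ) * z + d) * f z :=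
      hFmod z τ₂ hz h₂
    have hderiv : deriv f (((a : ℂ) * z + b) / ((c : ℂ) * z + d))
        = ((c : ℂ) * z + d) ^ 2 * (χ * c * f z + χ * ((c : ℂ) * z + d) * deriv f z) := by
      rw [mul_one_div, div_eq_iff (pow_ne_zero 2 hjz)] at hk1
      linear_combination hk1
    simp only [hgdef]
    rw [hderiv, hfγ]
    field_simp
  -- step 3 : transformation of deriv g
  have key2 : ∀ z : ℂ, 0 < z.im →
      deriv g (((a : ℂ) * z + b) / ((c : ℂ) * z + d)) * (1 / ((c : ℂ) * z + d) ^ 2)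
        = c ^ 2 * K + 2 * c * ((c : ℂ) * z + d) * g z + ((c : ℂ) * z + d) ^ 2 * deriv g z := by
    intro z hz
    have hγz := him z hz
    have hdg : HasDerivAt g (deriv g (((a : ℂ) * z + b) / ((c : ℂ) * z + d)))
        (((a : ℂ) * z + b) / ((c : ℂ) * z + d)) :=
      ((hga _ hγz).differentiableAt).hasDerivAt
    have hdgz : HasDerivAt g (deriv g z) z := ((hga z hz).differentiableAt).hasDerivAt
    have hcomp : HasDerivAt (fun w : ℂ => g (((a : ℂ) * w + b) / ((c : ℂ) * w + d)))
        (deriv g (((a : ℂ) * z + b) / ((c : ℂ) * z + d)) * (1 / ((c : ℂ) * z + d) ^ 2)) z :=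
      by have := hdg.comp z (hγd z hz); exact this
    have hlin : HasDerivAt (fun w : ℂ => (c : ℂ) * w + d) (c : ℂ) z := by
      simpa using ((hasDerivAt_id z).const_mul (c : ℂ)).add_const (d : ℂ)
    have h1 : HasDerivAt (fun w : ℂ => (c : ℂ) * ((c : ℂ) * w + d) * K) ((c : ℂ) * (c : ℂ) * K) z := by
      simpa using (hlin.const_mul (c : ℂ)).mul_const K
    have h2 : HasDerivAt (fun w : ℂ => ((c : ℂ) * w + d) ^ 2 * g w)
        ((2 * ((c : ℂ) * z + d) ^ 1 * c) * g z + ((c : ℂ) * z + d) ^ 2 * deriv g z) z := by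
      have := (hlin.fun_pow 2).fun_mul hdgz
      exact this.congr_deriv (by rw [show (2:ℕ) - 1 = 1 from rfl]; push_cast; ring)
    have hrhs : HasDerivAt
        (fun w : ℂ => (c : ℂ) * ((c : ℂ) * w + d) * K + ((c : ℂ) * w + d) ^ 2 * g w)
        (c ^ 2 * K + 2 * c * ((c : ℂ) * z + d) * g z + ((c : ℂ) * z + d) ^ 2 * deriv g z) z := by
      have := h1.fun_add h2
      exact this.congr_deriv (by ring)
    have heq : (fun w : ℂ => g (((a : ℂ) * w + b) / ((c : ℂ) * w + d)))
        =ᶠ[nhds z] (fun w : ℂ => (c : ℂ) * ((c : ℂ) * w + d) * K + ((c : ℂ) * w + d) ^ 2 * g w) := by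
      filter_upwards [hU.mem_nhds hz] with w hw
      exact hgmod w hw
    exact (hcomp.congr_of_eventuallyEq heq.symm).unique hrhs
  -- conclusion
  have hD1 : ∀ w : ℂ, Dq1 (Gq1 F) (w, τ₂) = K * deriv g w := fun w => rfl
  have hG1 : ∀ w : ℂ, Gq1 F (w, τ₂) = g w := fun w => rfl
  have e1 := hgmod τ₁ h₁
  have e2 := key2 τ₁ h₁
  have e2' : deriv g (((a : ℂ) * τ₁ + b) / ((c : ℂ) * τ₁ + d))
      = ((c : ℂ) * τ₁ + d) ^ 2 *
        (c ^ 2 * K + 2 * c * ((c : ℂ) * τ₁ + d) * g τ₁ + ((c : ℂ) * τ₁ + d) ^ 2 * deriv g τ₁) := by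
    rw [mul_one_div, div_eq_iff (pow_ne_zero 2 (hj τ₁ h₁))] at e2
    linear_combination e2
  simp only [hD1, hG1]
  rw [e1, e2']
  ring
end
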